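/- Let n ≥ 3 and r > 0. Suppose φ is continuous on {x ∈ ℝⁿ : |x| ≥ r}, harmonic on {|x| > r}, bounded, vanishes on the sphere {|x| = r}, and satisfies φ(x) → 1 as |x| → ∞. Then φ(x) = 1 − (r/|x|)^{n−2} for all |x| ≥ r. -/

import Mathlib

open Set Filter

/-- The Laplacian of `f : ℝⁿ → ℝ`, as the sum of second partial derivatives
in the coordinate directions. -/
noncomputable def lap (n : ℕ) (f : EuclideanSpace ℝ (Fin n) → ℝ)
    (x : EuclideanSpace ℝ (Fin n)) : ℝ :=
  ∑ i : Fin n, fderiv ℝ (fun y => fderiv ℝ f y (EuclideanSpace.single i 1)) x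
      (EuclideanSpace.single i 1)


lemma second_deriv_nonpos_of_isLocalMax {F G : ℝ → ℝ} {L : ℝ}
    (hF : ∀ᶠ t in nhds (0:ℝ), HasDerivAt F (G t) t)
    (hG : HasDerivAt G L 0) (hmax : IsLocalMax F 0) : L ≤ 0 := by
  by_contra hL
  push_neg at hL
  have hF0 : HasDerivAt F (G 0) 0 := hF.self_of_nhds
  have hG0 : G 0 = 0 := by
    have h1 : deriv F 0 = 0 := hmax.deriv_eq_zero
    rw [← hF0.deriv, h1]
  -- eventually G t > 0 for t > 0 small
  have hslope : Tendsto (fun t => G t / t) (nhdsWithin 0 {(0:ℝ)}ᶜ) (nhds L) := by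
    have := hasDerivAt_iff_tendsto_slope.mp hG
    apply this.congr'
    filter_upwards [self_mem_nhdsWithin] with t ht
    rw [slope_def_field, hG0, sub_zero, sub_zero]
  have hev : ∀ᶠ t in nhdsWithin (0:ℝ) (Ioi 0), G t > 0 := by
    have h2 : ∀ᶠ t in nhdsWithin 0 {(0:ℝ)}ᶜ, G t / t > 0 :=
      hslope.eventually (eventually_gt_nhds hL)
    have h3 : ∀ᶠ t in nhdsWithin (0:ℝ) (Ioi 0), G t / t > 0 :=
      h2.filter_mono (nhdsWithin_mono 0 (fun t ht => ne_of_gt ht))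
    filter_upwards [h3, self_mem_nhdsWithin] with t h1 h2
    exact (div_pos_iff.mp h1).resolve_right (fun ⟨_, h⟩ => absurd h2 (not_lt.mpr h.le)) |>.1
  -- find interval
  obtain ⟨δ₁, hδ₁, hball⟩ := Metric.eventually_nhds_iff.mp (hF.and hmax)
  obtain ⟨δ₂, hδ₂, hG2⟩ := Metric.eventually_nhds_iff.mp (eventually_nhdsWithin_iff.mp hev)
  set δ := min δ₁ δ₂ / 2 with hδdef
  have hδpos : 0 < δ := by positivity
  have hsub : Icc (0:ℝ) δ ⊆ Metric.ball 0 δ₁ := by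
    intro t ht
    simp only [Metric.mem_ball, Real.dist_eq, sub_zero]
    rw [abs_of_nonneg ht.1]
    calc t ≤ δ := ht.2
    _ < δ₁ := by
          rw [hδdef]
          have := min_le_left δ₁ δ₂; linarith
  have hcont : ContinuousOn F (Icc 0 δ) := fun t ht =>
    ((hball (Metric.mem_ball.mp (hsub ht))).1.continuousAt).continuousWithinAt
  have hderiv : ∀ t ∈ Ioo (0:ℝ) δ, 0 < deriv F t := by
    intro t ht
    have h1 : HasDerivAt F (G t) t := (hball (Metric.mem_ball.mp (hsub ⟨ht.1.le, ht.2.le⟩))).1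
    rw [h1.deriv]
    apply hG2
    · simp only [Real.dist_eq, sub_zero]
      rw [abs_of_nonneg ht.1.le]
      have := min_le_right δ₁ δ₂
      calc t < δ := ht.2
      _ < δ₂ := by rw [hδdef]; linarith
    · exact ht.1
  have hmono : StrictMonoOn F (Icc 0 δ) :=
    strictMonoOn_of_deriv_pos (convex_Icc 0 δ) hcont (by
      rwa [interior_Icc])
  have hlt : F 0 < F δ := hmono (by constructor <;> [rfl; exact hδpos.le] ) (by
      exact ⟨hδpos.le, le_refl δ⟩) hδpos
  have hle : F δ ≤ F 0 := (hball (Metric.mem_ball.mp (hsub ⟨hδpos.le, le_refl δ⟩))).2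
  linarith

lemma dir2_nonpos {n : ℕ} {f : EuclideanSpace ℝ (Fin n) → ℝ} {x v : EuclideanSpace ℝ (Fin n)}
    (hf : ContDiffAt ℝ 2 f x) (hmax : IsLocalMax f x) :
    fderiv ℝ (fun y => fderiv ℝ f y v) x v ≤ 0 := by
  set line : ℝ → EuclideanSpace ℝ (Fin n) := fun t => x + t • v with hline
  have hline0 : line 0 = x := by simp [hline]
  have hlined : ∀ t : ℝ, HasDerivAt line v t := fun t => by
    simpa [hline] using ((hasDerivAt_id t).smul_const v).const_add x
  have hlinec : Continuous line := by continuity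
  set F : ℝ → ℝ := fun t => f (line t) with hF
  set G : ℝ → ℝ := fun t => fderiv ℝ f (line t) v with hG
  have hev : ∀ᶠ t in nhds (0:ℝ), HasDerivAt F (G t) t := by
    have h1 : ∀ᶠ y in nhds x, ContDiffAt ℝ 2 f y := hf.eventually (by simp)
    have h2 : ∀ᶠ t in nhds (0:ℝ), ContDiffAt ℝ 2 f (line t) := by
      have hc : ContinuousAt line 0 := hlinec.continuousAt
      rw [ContinuousAt, hline0] at hc
      exact hc.eventually h1
    filter_upwards [h2] with t ht
    have hd : DifferentiableAt ℝ f (line t) := ht.differentiableAt (by norm_num)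
    exact (hd.hasFDerivAt.comp_hasDerivAt t (hlined t))
  have hDd : DifferentiableAt ℝ (fun y => fderiv ℝ f y v) x := by
    have h1 : ContDiffAt ℝ 1 (fderiv ℝ f) x := hf.fderiv_right (le_refl _)
    have h2 : DifferentiableAt ℝ (fderiv ℝ f) x := h1.differentiableAt (by norm_num)
    exact (ContinuousLinearMap.apply ℝ ℝ v).differentiableAt.comp x h2
  have hGd : HasDerivAt G (fderiv ℝ (fun y => fderiv ℝ f y v) x v) 0 := by
    have hl0 : HasDerivAt line v 0 := hlined 0
    have hfd : HasFDerivAt (fun y => fderiv ℝ f y v) (fderiv ℝ (fun y => fderiv ℝ f y v) x) (line 0) := by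
      rw [hline0]; exact hDd.hasFDerivAt
    exact hfd.comp_hasDerivAt 0 hl0
  have hmaxF : IsLocalMax F 0 := by
    have hm : IsLocalMax f (line 0) := by rwa [hline0]
    exact hm.comp_continuous hlinec.continuousAt
  exact second_deriv_nonpos_of_isLocalMax hev hGd hmaxF

lemma diff_fderiv_apply {n : ℕ} {f : EuclideanSpace ℝ (Fin n) → ℝ}
    {x v : EuclideanSpace ℝ (Fin n)} (hf : ContDiffAt ℝ 2 f x) :
    DifferentiableAt ℝ (fun y => fderiv ℝ f y v) x := by
  have h1 : ContDiffAt ℝ 1 (fderiv ℝ f) x := hf.fderiv_right (le_refl _)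
  have h2 : DifferentiableAt ℝ (fderiv ℝ f) x := h1.differentiableAt (by norm_num)
  exact (ContinuousLinearMap.apply ℝ ℝ v).differentiableAt.comp x h2

lemma lap_comb {n : ℕ} (a b : ℝ) (f g : EuclideanSpace ℝ (Fin n) → ℝ)
    (x : EuclideanSpace ℝ (Fin n)) (hf : ContDiffAt ℝ 2 f x) (hg : ContDiffAt ℝ 2 g x) :
    lap n (fun y => a * f y + b * g y) x = a * lap n f x + b * lap n g x := by
  unfold lap
  rw [Finset.mul_sum, Finset.mul_sum, ← Finset.sum_add_distrib]
  apply Finset.sum_congr rfl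
  intro i _
  set v := EuclideanSpace.single i (1:ℝ) with hv
  have hev : (fun y => fderiv ℝ (fun z => a * f z + b * g z) y v)
      =ᶠ[nhds x] (fun y => a * fderiv ℝ f y v + b * fderiv ℝ g y v) := by
    filter_upwards [hf.eventually (by simp), hg.eventually (by simp)] with y hfy hgy
    have hdf : DifferentiableAt ℝ f y := hfy.differentiableAt (by norm_num)
    have hdg : DifferentiableAt ℝ g y := hgy.differentiableAt (by norm_num)
    rw [fderiv_fun_add (hdf.const_mul a) (hdg.const_mul b), fderiv_const_mul hdf a,
      fderiv_const_mul hdg b]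
    simp
  rw [hev.fderiv_eq]
  have hdf2 : DifferentiableAt ℝ (fun y => fderiv ℝ f y v) x := diff_fderiv_apply hf
  have hdg2 : DifferentiableAt ℝ (fun y => fderiv ℝ g y v) x := diff_fderiv_apply hg
  rw [fderiv_fun_add (hdf2.const_mul a) (hdg2.const_mul b), fderiv_const_mul hdf2 a,
    fderiv_const_mul hdg2 b]
  simp

lemma lap_sub_const {n : ℕ} (f : EuclideanSpace ℝ (Fin n) → ℝ) (c : ℝ)
    (x : EuclideanSpace ℝ (Fin n)) : lap n (fun y => f y - c) x = lap n f x := by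
  unfold lap
  apply Finset.sum_congr rfl
  intro i _
  have h : (fun y => fderiv ℝ (fun z => f z - c) y (EuclideanSpace.single i (1:ℝ)))
      = (fun y => fderiv ℝ f y (EuclideanSpace.single i (1:ℝ))) := by
    funext y
    rw [fderiv_sub_const]
  rw [h]

noncomputable def qf (n : ℕ) : EuclideanSpace ℝ (Fin n) → ℝ := fun y => ∑ i, y i ^ 2

noncomputable def qd {n : ℕ} (x : EuclideanSpace ℝ (Fin n)) :
    EuclideanSpace ℝ (Fin n) →L[ℝ] ℝ := ∑ i, (2 * x i) • EuclideanSpace.proj i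

lemma qf_eq_norm {n : ℕ} (y : EuclideanSpace ℝ (Fin n)) : qf n y = ‖y‖ ^ 2 := by
  rw [EuclideanSpace.norm_eq, Real.sq_sqrt (by positivity)]
  simp [qf, Real.norm_eq_abs, sq_abs]

lemma contDiff_qf {n : ℕ} : ContDiff ℝ 2 (qf n) := by
  apply ContDiff.sum
  intro i _
  exact ((EuclideanSpace.proj i).contDiff (𝕜 := ℝ)).pow 2

lemma qf_nonneg {n : ℕ} (y : EuclideanSpace ℝ (Fin n)) : 0 ≤ qf n y := by
  rw [qf_eq_norm]; positivity

lemma hasFDerivAt_qf {n : ℕ} (x : EuclideanSpace ℝ (Fin n)) :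
    HasFDerivAt (qf n) (qd x) x := by
  apply HasFDerivAt.fun_sum
  intro i _
  have h1 : HasDerivAt (fun t : ℝ => t ^ 2) (2 * x i) (x i) := by
    simpa using hasDerivAt_pow 2 (x i)
  have h2 : HasFDerivAt (fun y : EuclideanSpace ℝ (Fin n) => y i)
      (EuclideanSpace.proj (𝕜 := ℝ) i) x := (EuclideanSpace.proj (𝕜 := ℝ) i).hasFDerivAt
  exact h1.comp_hasFDerivAt x h2

lemma qd_apply {n : ℕ} (x : EuclideanSpace ℝ (Fin n)) (j : Fin n) :
    qd x (EuclideanSpace.single j 1) = 2 * x j := by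
  simp only [qd, ContinuousLinearMap.sum_apply, ContinuousLinearMap.smul_apply,
    PiLp.proj_apply, EuclideanSpace.single_apply, smul_eq_mul]
  rw [Finset.sum_eq_single j]
  · simp
  · intro i _ hij
    simp [hij]
  · simp

lemma fderiv_qf {n : ℕ} (y : EuclideanSpace ℝ (Fin n)) : fderiv ℝ (qf n) y = qd y :=
  (hasFDerivAt_qf y).fderiv

lemma lap_qf {n : ℕ} (x : EuclideanSpace ℝ (Fin n)) : lap n (qf n) x = 2 * n := by
  unfold lap
  have key : ∀ i : Fin n,
      fderiv ℝ (fun y => fderiv ℝ (qf n) y (EuclideanSpace.single i 1)) x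
        (EuclideanSpace.single i 1) = 2 := by
    intro i
    have h1 : (fun y : EuclideanSpace ℝ (Fin n) => fderiv ℝ (qf n) y (EuclideanSpace.single i 1))
        = fun y => ((2:ℝ) • EuclideanSpace.proj (𝕜 := ℝ) i) y := by
      funext y
      rw [fderiv_qf, qd_apply]
      simp [mul_comm]
    rw [h1, ContinuousLinearMap.fderiv]
    simp [EuclideanSpace.single_apply]
  rw [Finset.sum_congr rfl (fun i _ => key i)]
  simp [mul_comm]

noncomputable def gf (n : ℕ) (c : ℝ) : EuclideanSpace ℝ (Fin n) → ℝ := fun y => qf n y ^ c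

lemma contDiffAt_gf {n : ℕ} {c : ℝ} {x : EuclideanSpace ℝ (Fin n)} (hx : qf n x ≠ 0) :
    ContDiffAt ℝ 2 (gf n c) x :=
  (Real.contDiffAt_rpow_const_of_ne hx).comp x contDiff_qf.contDiffAt

lemma continuous_qf {n : ℕ} : Continuous (qf n) := contDiff_qf.continuous

lemma hasFDerivAt_gf {n : ℕ} {c : ℝ} {x : EuclideanSpace ℝ (Fin n)} (hx : 0 < qf n x) :
    HasFDerivAt (gf n c) ((c * qf n x ^ (c - 1)) • qd x) x :=
  (Real.hasDerivAt_rpow_const (Or.inl hx.ne')).comp_hasFDerivAt x (hasFDerivAt_qf x)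

lemma fderiv_gf_apply {n : ℕ} {c : ℝ} {x : EuclideanSpace ℝ (Fin n)} (hx : 0 < qf n x)
    (i : Fin n) : fderiv ℝ (gf n c) x (EuclideanSpace.single i 1)
      = 2 * c * (qf n x ^ (c - 1) * x i) := by
  rw [(hasFDerivAt_gf hx).fderiv]
  rw [ContinuousLinearMap.smul_apply, qd_apply, smul_eq_mul]
  ring

lemma lap_gf {n : ℕ} {c : ℝ} {x : EuclideanSpace ℝ (Fin n)} (hx : 0 < qf n x) :
    lap n (gf n c) x = 2 * c * ((n : ℝ) + 2 * (c - 1)) * qf n x ^ (c - 1) := by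
  have hev : ∀ᶠ y in nhds x, 0 < qf n y :=
    (continuous_qf.continuousAt (x := x)).eventually (eventually_gt_nhds hx)
  have key : ∀ i : Fin n,
      fderiv ℝ (fun y => fderiv ℝ (gf n c) y (EuclideanSpace.single i 1)) x
        (EuclideanSpace.single i 1)
      = 2 * c * qf n x ^ (c - 1) + 4 * c * (c - 1) * qf n x ^ (c - 1 - 1) * x i ^ 2 := by
    intro i
    have heq : (fun y => fderiv ℝ (gf n c) y (EuclideanSpace.single i 1))
        =ᶠ[nhds x] fun y => 2 * c * (qf n y ^ (c - 1) * y i) := by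
      filter_upwards [hev] with y hy
      exact fderiv_gf_apply hy i
    rw [heq.fderiv_eq]
    have hA : HasFDerivAt (fun y : EuclideanSpace ℝ (Fin n) => qf n y ^ (c - 1))
        (((c - 1) * qf n x ^ (c - 1 - 1)) • qd x) x :=
      (Real.hasDerivAt_rpow_const (Or.inl hx.ne')).comp_hasFDerivAt x (hasFDerivAt_qf x)
    have hB : HasFDerivAt (fun y : EuclideanSpace ℝ (Fin n) => y i)
        (EuclideanSpace.proj (𝕜 := ℝ) i) x := (EuclideanSpace.proj (𝕜 := ℝ) i).hasFDerivAt
    have hmul := (hA.mul hB).const_mul (2 * c)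
    rw [HasFDerivAt.fderiv (f := fun y => 2 * c * (qf n y ^ (c - 1) * y i)) hmul]
    simp only [ContinuousLinearMap.smul_apply, ContinuousLinearMap.add_apply,
      ContinuousLinearMap.smul_apply, PiLp.proj_apply, qd_apply, smul_eq_mul,
      EuclideanSpace.single_apply]
    simp
    ring
  unfold lap
  rw [Finset.sum_congr rfl (fun i _ => key i), Finset.sum_add_distrib, Finset.sum_const,
    ← Finset.mul_sum]
  have hsum : ∑ i : Fin n, (x i) ^ 2 = qf n x := rfl
  rw [hsum]
  have hq : qf n x ^ (c - 1 - 1) * qf n x = qf n x ^ (c - 1) := by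
    nth_rewrite 2 [← Real.rpow_one (qf n x)]
    rw [← Real.rpow_add hx]
    ring_nf
  simp only [Finset.card_univ, Fintype.card_fin, nsmul_eq_mul]
  linear_combination 4 * c * (c - 1) * hq

lemma maxprin {n : ℕ} (hn : 0 < n) {r R m : ℝ} (hr : 0 < r) (hrR : r < R)
    {ψ : EuclideanSpace ℝ (Fin n) → ℝ}
    (hc : ContinuousOn ψ {y | r ≤ ‖y‖ ∧ ‖y‖ ≤ R})
    (h2 : ∀ y : EuclideanSpace ℝ (Fin n), r < ‖y‖ → ContDiffAt ℝ 2 ψ y)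
    (hharm : ∀ y : EuclideanSpace ℝ (Fin n), r < ‖y‖ → lap n ψ y = 0)
    (hbd : ∀ y : EuclideanSpace ℝ (Fin n), ‖y‖ = r ∨ ‖y‖ = R → ψ y ≤ m) :
    ∀ x : EuclideanSpace ℝ (Fin n), r ≤ ‖x‖ → ‖x‖ ≤ R → ψ x ≤ m := by
  intro x hx1 hx2
  have hR : 0 < R := hr.trans hrR
  have hmain : ∀ ε : ℝ, 0 < ε → ψ x ≤ m + ε * R ^ 2 := by
    intro ε hε
    set w : EuclideanSpace ℝ (Fin n) → ℝ := fun y => ψ y + ε * qf n y with hw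
    set A : Set (EuclideanSpace ℝ (Fin n)) := {y | r ≤ ‖y‖ ∧ ‖y‖ ≤ R} with hA
    have hAcomp : IsCompact A := by
      have hAeq : A = Metric.closedBall 0 R ∩ {y | r ≤ ‖y‖} := by
        ext y
        simp only [hA, mem_setOf_eq, mem_inter_iff, Metric.mem_closedBall, dist_zero_right]
        tauto
      rw [hAeq]
      exact (isCompact_closedBall 0 R).inter_right
        (isClosed_le continuous_const continuous_norm)
    have hwc : ContinuousOn w A :=
      hc.add ((continuous_const.mul continuous_qf).continuousOn)
    obtain ⟨x0, hx0A, hx0max⟩ := hAcomp.exists_isMaxOn ⟨x, hx1, hx2⟩ hwc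
    have hxA : x ∈ A := ⟨hx1, hx2⟩
    by_cases hb : ‖x0‖ = r ∨ ‖x0‖ = R
    · have h1 : ψ x ≤ w x := by
        have : 0 ≤ ε * qf n x := by
          have := qf_eq_norm x
          nlinarith [norm_nonneg x]
        simp only [hw]; linarith
      have h2' : w x ≤ w x0 := hx0max hxA
      have h3 : w x0 ≤ m + ε * R ^ 2 := by
        have hq0 : qf n x0 = ‖x0‖ ^ 2 := qf_eq_norm x0
        have hb2 : ψ x0 ≤ m := hbd x0 hb
        have : ‖x0‖ ^ 2 ≤ R ^ 2 := by
          have h4 := hx0A.2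
          nlinarith [norm_nonneg x0]
        simp only [hw]
        nlinarith
      linarith
    · push_neg at hb
      have hlt1 : r < ‖x0‖ := lt_of_le_of_ne hx0A.1 (Ne.symm hb.1)
      have hlt2 : ‖x0‖ < R := lt_of_le_of_ne hx0A.2 hb.2
      have hAnhds : A ∈ nhds x0 := by
        rw [mem_nhds_iff]
        refine ⟨{y | r < ‖y‖ ∧ ‖y‖ < R}, fun y hy => ⟨hy.1.le, hy.2.le⟩, ?_, ⟨hlt1, hlt2⟩⟩
        exact IsOpen.inter (isOpen_lt continuous_const continuous_norm)
          (isOpen_lt continuous_norm continuous_const)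
      have hlocmax : IsLocalMax w x0 := hx0max.isLocalMax hAnhds
      have hw2 : ContDiffAt ℝ 2 w x0 :=
        (h2 x0 hlt1).add (contDiffAt_const.mul contDiff_qf.contDiffAt)
      have hlap_le : lap n w x0 ≤ 0 := by
        unfold lap
        apply Finset.sum_nonpos
        intro i _
        exact dir2_nonpos hw2 hlocmax
      have hlap_eq : lap n w x0 = ε * (2 * n) := by
        have hweq : w = fun y => 1 * ψ y + ε * qf n y := by funext y; simp [hw]
        rw [hweq, lap_comb 1 ε ψ (qf n) x0 (h2 x0 hlt1) contDiff_qf.contDiffAt,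
          hharm x0 hlt1, lap_qf]
        ring
      have hpos : 0 < ε * (2 * n) := by
        have hn' : (0:ℝ) < n := by exact_mod_cast hn
        exact mul_pos hε (by linarith)
      linarith
  by_contra hcon
  push_neg at hcon
  have hR2 : (0:ℝ) < R ^ 2 := by positivity
  have hd : 0 < (ψ x - m) / R ^ 2 / 2 :=
    div_pos (div_pos (by linarith) hR2) two_pos
  have := hmain _ hd
  rw [div_div, div_mul_eq_mul_div, mul_comm] at this
  have h5 : R ^ 2 * (ψ x - m) / (R ^ 2 * 2) = (ψ x - m) / 2 := by
    field_simp
  rw [h5] at this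
  linarith


/-- For `n ≥ 3`, `r > 0`: if `φ` is continuous on `{|x| ≥ r}`, harmonic on `{|x| > r}`,
bounded there, vanishes on the sphere `{|x| = r}` and tends to `1` at infinity,
then `φ(x) = 1 - (r/|x|)^{n-2}` for all `|x| ≥ r`. -/
theorem exterior_dirichlet_uniqueness {n : ℕ} (hn : 3 ≤ n) (r : ℝ) (hr : 0 < r)
    (φ : EuclideanSpace ℝ (Fin n) → ℝ)
    (hcont : ContinuousOn φ {x : EuclideanSpace ℝ (Fin n) | r ≤ ‖x‖})
    (hC2 : ContDiffOn ℝ 2 φ {x : EuclideanSpace ℝ (Fin n) | r < ‖x‖})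
    (hharm : ∀ x : EuclideanSpace ℝ (Fin n), r < ‖x‖ → lap n φ x = 0)
    (hbdd : ∃ M : ℝ, ∀ x : EuclideanSpace ℝ (Fin n), r ≤ ‖x‖ → |φ x| ≤ M)
    (hzero : ∀ x : EuclideanSpace ℝ (Fin n), ‖x‖ = r → φ x = 0)
    (hlim : Tendsto φ (cocompact (EuclideanSpace ℝ (Fin n))) (nhds 1)) :
    ∀ x : EuclideanSpace ℝ (Fin n), r ≤ ‖x‖ → φ x = 1 - (r / ‖x‖) ^ (n - 2) := by
  have hn2 : 2 ≤ n := by omega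
  have hnR : (3:ℝ) ≤ (n:ℝ) := by exact_mod_cast hn
  set c : ℝ := (2 - (n:ℝ)) / 2 with hc
  set ψ : EuclideanSpace ℝ (Fin n) → ℝ :=
    fun y => (φ y - 1) + r ^ (n - 2) * gf n c y with hψ
  have hopen : IsOpen {y : EuclideanSpace ℝ (Fin n) | r < ‖y‖} :=
    isOpen_lt continuous_const continuous_norm
  have hqpos : ∀ y : EuclideanSpace ℝ (Fin n), r ≤ ‖y‖ → 0 < qf n y := by
    intro y hy
    rw [qf_eq_norm]
    have : 0 < ‖y‖ := lt_of_lt_of_le hr hy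
    positivity
  have hcast : ((n - 2 : ℕ) : ℝ) = (n:ℝ) - 2 := by
    rw [Nat.cast_sub hn2]; norm_num
  have hgval : ∀ y : EuclideanSpace ℝ (Fin n), 0 < ‖y‖ → gf n c y = ‖y‖ ^ ((2:ℝ) * c) := by
    intro y hy
    simp only [gf]
    rw [qf_eq_norm, ← Real.rpow_natCast ‖y‖ 2, ← Real.rpow_mul (norm_nonneg y)]
    norm_num [mul_comm]
  have h2c : (2:ℝ) * c = 2 - n := by rw [hc]; ring
  have hψr : ∀ y : EuclideanSpace ℝ (Fin n), ‖y‖ = r → ψ y = 0 := by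
    intro y hy
    have h1 : φ y = 0 := hzero y hy
    have hgy : gf n c y = r ^ ((2:ℝ) - (n:ℝ)) := by
      rw [hgval y (by rw [hy]; exact hr), hy, h2c]
    have h3 : (r:ℝ) ^ (n-2:ℕ) * r ^ ((2:ℝ) - (n:ℝ)) = 1 := by
      rw [← Real.rpow_natCast r (n-2), ← Real.rpow_add hr, hcast]
      norm_num
    simp only [hψ, h1, hgy]
    linarith
  have hφ2 : ∀ y : EuclideanSpace ℝ (Fin n), r < ‖y‖ → ContDiffAt ℝ 2 φ y := fun y hy =>
    hC2.contDiffAt (hopen.mem_nhds hy)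
  have hψ2 : ∀ y : EuclideanSpace ℝ (Fin n), r < ‖y‖ → ContDiffAt ℝ 2 ψ y := by
    intro y hy
    have hq : qf n y ≠ 0 := (hqpos y hy.le).ne'
    exact ((hφ2 y hy).sub contDiffAt_const).add (contDiffAt_const.mul (contDiffAt_gf hq))
  have hψharm : ∀ y : EuclideanSpace ℝ (Fin n), r < ‖y‖ → lap n ψ y = 0 := by
    intro y hy
    have hq : 0 < qf n y := hqpos y hy.le
    have hweq : ψ = fun z => 1 * (φ z - 1) + (r ^ (n-2)) * gf n c z := by
      funext z; simp [hψ]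
    rw [hweq, lap_comb 1 (r^(n-2)) _ _ y ((hφ2 y hy).sub contDiffAt_const)
      (contDiffAt_gf hq.ne'), lap_sub_const, hharm y hy, lap_gf hq]
    have hz : (n:ℝ) + 2 * (c - 1) = 0 := by rw [hc]; ring
    rw [hz]
    ring
  have hψcont : ContinuousOn ψ {y : EuclideanSpace ℝ (Fin n) | r ≤ ‖y‖} := by
    intro y hy
    have hq : qf n y ≠ 0 := (hqpos y hy).ne'
    exact (((hcont y hy).sub continuousWithinAt_const).add
      (continuousWithinAt_const.mul ((contDiffAt_gf hq).continuousAt.continuousWithinAt)))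
  have hqten : Tendsto (qf n) (cocompact (EuclideanSpace ℝ (Fin n))) atTop := by
    have h1 : Tendsto (fun y : EuclideanSpace ℝ (Fin n) => ‖y‖ ^ 2)
        (cocompact (EuclideanSpace ℝ (Fin n))) atTop :=
      (tendsto_pow_atTop two_ne_zero).comp tendsto_norm_cocompact_atTop
    exact h1.congr (fun y => (qf_eq_norm y).symm)
  have hgten : Tendsto (gf n c) (cocompact (EuclideanSpace ℝ (Fin n))) (nhds 0) := by
    have h1 : Tendsto (fun t : ℝ => t ^ c) atTop (nhds 0) := by
      have h2 := tendsto_rpow_neg_atTop (show (0:ℝ) < ((n:ℝ) - 2)/2 by linarith)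
      have h3 : -(((n:ℝ) - 2)/2) = c := by rw [hc]; ring
      rw [h3] at h2; exact h2
    exact h1.comp hqten
  have hψten : Tendsto ψ (cocompact (EuclideanSpace ℝ (Fin n))) (nhds 0) := by
    have h1 : Tendsto (fun y => φ y - 1) (cocompact (EuclideanSpace ℝ (Fin n))) (nhds 0) := by
      simpa using hlim.sub_const 1
    have h2 : Tendsto (fun y => r^(n-2) * gf n c y)
        (cocompact (EuclideanSpace ℝ (Fin n))) (nhds 0) := by
      simpa using hgten.const_mul (r^(n-2) : ℝ)
    simpa using h1.add h2
  intro x hx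
  have habs : ∀ δ : ℝ, 0 < δ → |ψ x| ≤ δ := by
    intro δ hδ
    have hev0 : ∀ᶠ t : ℝ in nhds 0, |t| ≤ δ := by
      filter_upwards [eventually_abs_sub_lt 0 hδ] with t ht
      rw [sub_zero] at ht; exact ht.le
    have hev : ∀ᶠ y in cocompact (EuclideanSpace ℝ (Fin n)), |ψ y| ≤ δ :=
      hψten.eventually hev0
    obtain ⟨K, hKc, hKsub⟩ := mem_cocompact.mp hev
    obtain ⟨R0, hR0⟩ := hKc.isBounded.subset_closedBall 0
    set R : ℝ := max R0 (max ‖x‖ r) + 1 with hR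
    have hrR : r < R := by
      have : r ≤ max R0 (max ‖x‖ r) := le_trans (le_max_right _ _) (le_max_right _ _)
      linarith
    have hxR : ‖x‖ ≤ R := by
      have : ‖x‖ ≤ max R0 (max ‖x‖ r) := le_trans (le_max_left _ _) (le_max_right _ _)
      linarith
    have hbR : ∀ y : EuclideanSpace ℝ (Fin n), ‖y‖ = R → |ψ y| ≤ δ := by
      intro y hy
      apply hKsub
      intro hyK
      have h6 := hR0 hyK
      rw [Metric.mem_closedBall, dist_zero_right] at h6
      have hle : R0 ≤ max R0 (max ‖x‖ r) := le_max_left _ _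
      rw [hy] at h6
      linarith
    have hup : ψ x ≤ δ := by
      apply maxprin (by omega) hr hrR (hψcont.mono (fun y hy => hy.1)) hψ2 hψharm ?_ x hx hxR
      intro y hy
      rcases hy with hy | hy
      · rw [hψr y hy]; linarith
      · exact le_trans (le_abs_self _) (hbR y hy)
    have hdown : -ψ x ≤ δ := by
      have hψ2' : ∀ y : EuclideanSpace ℝ (Fin n), r < ‖y‖ → ContDiffAt ℝ 2 (fun z => -ψ z) y :=
        fun y hy => (hψ2 y hy).neg
      have hharm' : ∀ y : EuclideanSpace ℝ (Fin n), r < ‖y‖ → lap n (fun z => -ψ z) y = 0 := by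
        intro y hy
        have hne : (fun z => -ψ z) = fun z => (-1) * ψ z + 0 * ψ z := by funext z; ring
        rw [hne, lap_comb (-1) 0 ψ ψ y (hψ2 y hy) (hψ2 y hy), hψharm y hy]
        ring
      have hbound : ∀ y : EuclideanSpace ℝ (Fin n), ‖y‖ = r ∨ ‖y‖ = R → -ψ y ≤ δ := by
        intro y hy
        rcases hy with hy | hy
        · rw [hψr y hy]; simpa using hδ.le
        · have h7 := hbR y hy
          have h8 := neg_abs_le (ψ y)
          linarith
      exact maxprin (n := n) (by omega) hr hrR ((hψcont.mono (fun y hy => hy.1)).neg)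
        hψ2' hharm' hbound x hx hxR
    exact abs_le.mpr ⟨by linarith, hup⟩
  have hψx : ψ x = 0 := by
    have h0 : |ψ x| ≤ 0 :=
      le_of_forall_pos_le_add (fun ε hε => by simpa using habs ε hε)
    exact abs_eq_zero.mp (le_antisymm h0 (abs_nonneg _))
  have hxpos : 0 < ‖x‖ := lt_of_lt_of_le hr hx
  have hgx : gf n c x = ‖x‖ ^ ((2:ℝ) - (n:ℝ)) := by rw [hgval x hxpos, h2c]
  have hpow : (r / ‖x‖) ^ (n - 2) = r ^ (n-2) * ‖x‖ ^ ((2:ℝ) - (n:ℝ)) := by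
    rw [div_pow, div_eq_mul_inv]
    congr 1
    rw [← Real.rpow_natCast ‖x‖ (n-2), ← Real.rpow_neg (norm_nonneg x), hcast]
    congr 1
    ring
  have hfin : φ x - 1 + r^(n-2) * gf n c x = 0 := hψx
  rw [hgx] at hfin
  rw [hpow]
  linarith
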